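/- Let z_1, …, z_T be independent Bernoulli random variables with P(z_i = 1) = p_i ∈ [0,1], let Y = z_1 + … + z_T, and let ȳ = E[Y] = p_1 + … + p_T. If ȳ > 0, then E[1/(Y+1)] < 1/ȳ. -/

import Mathlib

open MeasureTheory ProbabilityTheory

/-- For independent Bernoulli random variables `z i` with parameters
`p i ∈ [0,1]`, `Y = ∑ i, z i` and `ȳ = E[Y] = ∑ i, p i > 0`, the negative moment
satisfies `E[1/(Y+1)] < 1/ȳ`. -/
theorem negative_moment_lt_inv_mean
    {Ω : Type*} [MeasurableSpace Ω] (μ : Measure Ω) [IsProbabilityMeasure μ]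
    (T : ℕ) (z : Fin T → Ω → ℕ) (p : Fin T → ℝ)
    (hmeas : ∀ i, Measurable (z i))
    (hval : ∀ i, ∀ ω, z i ω = 0 ∨ z i ω = 1)
    (hp01 : ∀ i, p i ∈ Set.Icc (0 : ℝ) 1)
    (hp : ∀ i, μ {ω | z i ω = 1} = ENNReal.ofReal (p i))
    (hindep : iIndepFun z μ)
    (hybar : 0 < ∑ i, p i) :
    ∫ ω, (1 : ℝ) / ((∑ i, z i ω) + 1) ∂μ < 1 / (∑ i, p i) := by
  classical
  -- basic notation
  set Y : Ω → ℕ := fun ω => ∑ i, z i ω with hYdef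
  set g : ℕ → ℝ := fun n => 1 / ((n : ℝ) + 1) with hgdef
  have hg_meas : Measurable g := measurable_from_nat
  have hcast_meas : Measurable (fun n : ℕ => (n : ℝ)) := measurable_from_nat
  set W : Fin T → Ω → ℕ := fun i ω => ∑ j ∈ Finset.univ.erase i, z j ω with hWdef
  have hYmeas : Measurable Y := Finset.measurable_sum _ (fun i _ => hmeas i)
  have hWmeas : ∀ i, Measurable (W i) := fun i =>
    Finset.measurable_sum _ (fun j _ => hmeas j)
  have hzle : ∀ i ω, z i ω ≤ 1 := by
    intro i ω; rcases hval i ω with h | h <;> simp [h]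
  have hYW : ∀ i ω, Y ω = z i ω + W i ω := by
    intro i ω
    simp only [hYdef, hWdef]
    exact (Finset.add_sum_erase _ _ (Finset.mem_univ i)).symm
  have hTpos : ∀ (_ : Fin T), 1 ≤ T := fun i => i.pos
  have hWle : ∀ i ω, W i ω + 1 ≤ T := by
    intro i ω
    have h1 : W i ω ≤ ∑ j ∈ Finset.univ.erase i, 1 :=
      Finset.sum_le_sum (fun j _ => hzle j ω)
    have h2 : ∑ j ∈ Finset.univ.erase i, 1 = T - 1 := by
      rw [Finset.sum_const, smul_eq_mul, mul_one, Finset.card_erase_of_mem (Finset.mem_univ i)]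
      simp
    have := hTpos i
    omega
  -- properties of g
  have hg_nonneg : ∀ n, 0 ≤ g n := by intro n; positivity
  have hg_le_one : ∀ n, g n ≤ 1 := by
    intro n
    rw [hgdef]
    rw [div_le_one (by positivity)]
    have : (0:ℝ) ≤ (n:ℝ) := Nat.cast_nonneg n
    linarith
  have hg_anti : ∀ {m n : ℕ}, m ≤ n → g n ≤ g m := by
    intro m n h
    apply one_div_le_one_div_of_le (by positivity)
    have : (m:ℝ) ≤ n := Nat.cast_le.mpr h
    linarith
  -- integrability helper
  have hint : ∀ (F : Ω → ℝ), Measurable F → (∀ ω, |F ω| ≤ 1) → Integrable F μ := by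
    intro F hF hb
    exact (integrable_const (1:ℝ)).mono' hF.aestronglyMeasurable (ae_of_all _ hb)
  have hintY : Integrable (fun ω => g (Y ω)) μ :=
    hint _ (hg_meas.comp hYmeas) (fun ω => abs_le.2 ⟨by linarith [hg_nonneg (Y ω)], hg_le_one _⟩)
  have hintW : ∀ i, Integrable (fun ω => g (W i ω)) μ := fun i =>
    hint _ (hg_meas.comp (hWmeas i))
      (fun ω => abs_le.2 ⟨by linarith [hg_nonneg (W i ω)], hg_le_one _⟩)
  have hzb : ∀ i ω, (0:ℝ) ≤ (z i ω : ℝ) ∧ (z i ω : ℝ) ≤ 1 := by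
    intro i ω
    rcases hval i ω with h | h <;> simp [h]
  have hintWz : ∀ i, Integrable (fun ω => g (W i ω) * (z i ω : ℝ)) μ := by
    intro i
    refine hint _ ((hg_meas.comp (hWmeas i)).mul (hcast_meas.comp (hmeas i))) (fun ω => ?_)
    rw [abs_mul]
    have h1 := hg_nonneg (W i ω); have h2 := hg_le_one (W i ω)
    have h3 := (hzb i ω).1; have h4 := (hzb i ω).2
    rw [abs_of_nonneg h1, abs_of_nonneg h3]
    nlinarith
  have hintz : ∀ i, Integrable (fun ω => (z i ω : ℝ)) μ := by
    intro i
    refine hint _ (hcast_meas.comp (hmeas i)) (fun ω => ?_)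
    rw [abs_of_nonneg (hzb i ω).1]; exact (hzb i ω).2
  -- E[z i] = p i
  have hEz : ∀ i, ∫ ω, (z i ω : ℝ) ∂μ = p i := by
    intro i
    have hset : MeasurableSet {ω | z i ω = 1} := hmeas i (measurableSet_singleton 1)
    have heq : (fun ω => (z i ω : ℝ)) =
        Set.indicator {ω | z i ω = 1} (fun _ => (1:ℝ)) := by
      funext ω
      rcases hval i ω with h | h <;> simp [Set.indicator, h]
    rw [heq, integral_indicator_const _ hset, measureReal_def, hp i, smul_eq_mul, mul_one,
      ENNReal.toReal_ofReal (hp01 i).1]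
  -- independence and product formula
  have hkey : ∀ i, ∫ ω, g (W i ω) * (z i ω : ℝ) ∂μ = (∫ ω, g (W i ω) ∂μ) * p i := by
    intro i
    have hW : W i = ∑ j ∈ Finset.univ.erase i, z j := by
      funext ω; simp [hWdef]
    have h1 : IndepFun (W i) (z i) μ := by
      rw [hW]
      exact iIndepFun.indepFun_finsetSum_of_notMem hindep hmeas (Finset.notMem_erase i _)
    have h2 : IndepFun (fun ω => g (W i ω)) (fun ω => (z i ω : ℝ)) μ :=
      h1.comp hg_meas hcast_meas
    have := h2.integral_mul_eq_mul_integral (hintW i).aestronglyMeasurable (hintz i).aestronglyMeasurable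
    rw [← hEz i, ← this]
    rfl
  -- pointwise identity for sum of the products
  have hsum_pt : ∀ ω, ∑ i, g (W i ω) * (z i ω : ℝ) =
      Set.indicator {ω | Y ω ≠ 0} (fun _ => (1:ℝ)) ω := by
    intro ω
    have hterm : ∀ i, g (W i ω) * (z i ω : ℝ) = (z i ω : ℝ) / (Y ω : ℝ) := by
      intro i
      rcases hval i ω with h | h
      · simp [h]
      · have hy : (Y ω : ℝ) = (W i ω : ℝ) + 1 := by
          rw [hYW i ω, h]; push_cast; ring
        rw [h, hgdef]
        simp [hy]
    rw [Finset.sum_congr rfl (fun i _ => hterm i), ← Finset.sum_div]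
    have hcast : ∑ i, (z i ω : ℝ) = (Y ω : ℝ) := by
      rw [hYdef]; push_cast; rfl
    rw [hcast]
    by_cases hY0 : Y ω = 0
    · simp [Set.indicator, hY0]
    · have : (Y ω : ℝ) ≠ 0 := Nat.cast_ne_zero.mpr hY0
      simp [Set.indicator, hY0, div_self this]
  -- the main bound: ∑ p i * E[g (W i)] ≤ 1
  have hC : ∑ i, (∫ ω, g (W i ω) ∂μ) * p i ≤ 1 := by
    have h1 : ∑ i, (∫ ω, g (W i ω) ∂μ) * p i
        = ∫ ω, ∑ i, g (W i ω) * (z i ω : ℝ) ∂μ := by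
      rw [integral_finset_sum _ (fun i _ => hintWz i)]
      exact (Finset.sum_congr rfl (fun i _ => (hkey i).symm))
    have hset : MeasurableSet {ω | Y ω ≠ 0} :=
      (hYmeas (measurableSet_singleton 0)).compl
    have h2 : ∫ ω, ∑ i, g (W i ω) * (z i ω : ℝ) ∂μ
        = (μ {ω | Y ω ≠ 0}).toReal := by
      rw [integral_congr_ae (ae_of_all _ hsum_pt), integral_indicator_const _ hset,
        smul_eq_mul, mul_one, measureReal_def]
    rw [h1, h2]
    have hle1 : μ {ω | Y ω ≠ 0} ≤ 1 := prob_le_one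
    calc (μ {ω | Y ω ≠ 0}).toReal ≤ (1 : ENNReal).toReal :=
          ENNReal.toReal_mono (by simp) hle1
      _ = 1 := by simp
  -- E[g Y] ≤ E[g (W i)] for each i
  have hle : ∀ i, ∫ ω, g (Y ω) ∂μ ≤ ∫ ω, g (W i ω) ∂μ := by
    intro i
    refine integral_mono hintY (hintW i) (fun ω => hg_anti ?_)
    rw [hYW i ω]; omega
  -- a strict gap at some i₀ with p i₀ > 0
  obtain ⟨i₀, -, hpi₀⟩ : ∃ i ∈ Finset.univ, 0 < p i := by
    by_contra h
    push_neg at h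
    have : ∑ i, p i ≤ 0 := Finset.sum_nonpos (fun i hi => h i hi)
    linarith
  set c : ℝ := 1 / ((T : ℝ) * ((T : ℝ) + 1)) with hcdef
  have hT1 : (1:ℝ) ≤ (T:ℝ) := by exact_mod_cast hTpos i₀
  have hcpos : 0 < c := by rw [hcdef]; positivity
  have hgap_pt : ∀ ω, g (Y ω) + c * (z i₀ ω : ℝ) ≤ g (W i₀ ω) := by
    intro ω
    rcases hval i₀ ω with h | h
    · have : Y ω = W i₀ ω := by rw [hYW i₀ ω, h]; omega
      rw [this, h]; simp
    · have hy : Y ω = W i₀ ω + 1 := by rw [hYW i₀ ω, h]; omega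
      have hwT : (W i₀ ω : ℝ) + 1 ≤ (T : ℝ) := by
        exact_mod_cast hWle i₀ ω
      have hw0 : (0:ℝ) ≤ (W i₀ ω : ℝ) := Nat.cast_nonneg _
      rw [hy, h, hgdef]
      push_cast
      rw [hcdef]
      have h1 : (0:ℝ) < (W i₀ ω : ℝ) + 1 := by linarith
      have h2 : (0:ℝ) < (W i₀ ω : ℝ) + 1 + 1 := by linarith
      have h3 : (0:ℝ) < (T:ℝ) := by linarith
      have h4 : (0:ℝ) < (T:ℝ) + 1 := by linarith
      rw [mul_one, div_add_div _ _ (ne_of_gt h2) (by positivity),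
        div_le_div_iff₀ (by positivity) h1]
      nlinarith [mul_le_mul hwT (show (W i₀ ω : ℝ) + 1 + 1 ≤ (T:ℝ) + 1 by linarith)
        (by linarith) (by linarith)]
  have hgap : ∫ ω, g (Y ω) ∂μ + c * p i₀ ≤ ∫ ω, g (W i₀ ω) ∂μ := by
    have h1 : ∫ ω, (g (Y ω) + c * (z i₀ ω : ℝ)) ∂μ ≤ ∫ ω, g (W i₀ ω) ∂μ :=
      integral_mono (hintY.add ((hintz i₀).const_mul c)) (hintW i₀) hgap_pt
    rwa [integral_add hintY ((hintz i₀).const_mul c), integral_const_mul, hEz i₀] at h1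
  have hstrict : ∫ ω, g (Y ω) ∂μ < ∫ ω, g (W i₀ ω) ∂μ := by
    have : 0 < c * p i₀ := mul_pos hcpos hpi₀
    linarith
  -- assemble
  have hgoal : (∫ ω, g (Y ω) ∂μ) * ∑ i, p i < 1 := by
    calc (∫ ω, g (Y ω) ∂μ) * ∑ i, p i = ∑ i, (∫ ω, g (Y ω) ∂μ) * p i := by
          rw [Finset.mul_sum]
      _ < ∑ i, (∫ ω, g (W i ω) ∂μ) * p i := by
          refine Finset.sum_lt_sum (fun i _ => ?_) ⟨i₀, Finset.mem_univ i₀, ?_⟩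
          · exact mul_le_mul_of_nonneg_right (hle i) (hp01 i).1
          · exact mul_lt_mul_of_pos_right hstrict hpi₀
      _ ≤ 1 := hC
  rw [lt_div_iff₀ hybar]
  exact hgoal
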